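/- Let G and H be finite graphs with no isolated vertices, and let φ, ψ: G → H be ×-homotopic graph morphisms. Then the induced functors φ_*, ψ_*: Π(G) → Π(H) are naturally isomorphic: for each vertex w of G there is an ≡-class γ_w of walks in H from φ(w) to ψ(w) such that for every walk α from w to w' in G, the naturality square commutes in Π(H): γ_w * (ψ∘α) ≡ (φ∘α) * γ_{w'}. -/

import Mathlib

/-- A graph: vertex type `V` with a symmetric adjacency relation (loops allowed). -/
structure XGraph (V : Type) where
  Adj : V → V → Prop
  symm : Symmetric Adj

variable {V W X : Type}

/-- `l` is the (nonempty) vertex sequence of a walk in `G`. -/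
def IsWalk (G : XGraph V) (l : List V) : Prop :=
  l ≠ [] ∧ l.Chain' G.Adj

/-- `l` is a walk in `G` from `x` to `y`. -/
def IsWalkFrom (G : XGraph V) (x y : V) (l : List V) : Prop :=
  l.Chain' G.Adj ∧ l.head? = some x ∧ l.getLast? = some y

/-- Concatenation of walks sharing an endpoint: follow `l`, then `m`. -/
def wconcat (l m : List V) : List V := l ++ m.tail

/-- A walk is prunable if some vertex `vᵢ` satisfies `vᵢ = vᵢ₊₂`. -/
def Prunable (l : List V) : Prop :=
  ∃ (p s : List V) (a b : V), l = p ++ a :: b :: a :: s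

/-- `m` is obtained from `l` by a single prune (deleting `vᵢ, vᵢ₊₁` when `vᵢ = vᵢ₊₂`). -/
def PruneOf (l m : List V) : Prop :=
  ∃ (p s : List V) (a b : V), l = p ++ a :: b :: a :: s ∧ m = p ++ a :: s

/-- A single prune step (in either direction) between walks of `G`. -/
def PruneStep (G : XGraph V) (l m : List V) : Prop :=
  IsWalk G l ∧ IsWalk G m ∧ (PruneOf l m ∨ PruneOf m l)

/-- Prune equivalence: the equivalence relation on walks of `G` generated by prunes. -/
def PruneEqv (G : XGraph V) : List V → List V → Prop :=
  Relation.EqvGen (PruneStep G)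

/-- A spider move: two walks of `G` of the same length which agree at every index
except (at most) a single interior index. -/
def SpiderStep (G : XGraph V) (l m : List V) : Prop :=
  IsWalk G l ∧ IsWalk G m ∧ l.length = m.length ∧
    ∃ i : ℕ, 0 < i ∧ i + 1 < l.length ∧ ∀ j : ℕ, j ≠ i → l[j]? = m[j]?

/-- Homotopy rel endpoints (`≡`): the equivalence relation on walks of `G`
generated by prunes and spider moves. -/
def HomEqv (G : XGraph V) : List V → List V → Prop :=
  Relation.EqvGen (fun l m => PruneStep G l m ∨ SpiderStep G l m)

/-- A graph morphism. -/
def IsHom (G : XGraph V) (H : XGraph W) (f : V → W) : Prop :=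
  ∀ {u v : V}, G.Adj u v → H.Adj (f u) (f v)

/-- One step of a ×-homotopy between graph morphisms. -/
def HtpyStep (G : XGraph V) (H : XGraph W) (f g : V → W) : Prop :=
  IsHom G H f ∧ IsHom G H g ∧ ∀ u v, G.Adj u v → H.Adj (f u) (g v)

/-- ×-homotopy of graph morphisms. -/
def Homotopic (G : XGraph V) (H : XGraph W) : (V → W) → (V → W) → Prop :=
  Relation.ReflTransGen (HtpyStep G H)

open List Relation

section Aux
variable {G : XGraph V} {H : XGraph W}

lemma getElem?_zero' (l : List V) : l[0]? = l.head? := by cases l <;> simp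

lemma eq_concat_of_getLast? {l : List V} {a : V} (h : l.getLast? = some a) :
    ∃ c, l = c ++ [a] := by
  rcases l.eq_nil_or_concat with rfl | ⟨c, b, rfl⟩
  · simp at h
  · simp [List.concat_eq_append] at h ⊢
    exact h

lemma PruneOf.head?_eq {l m : List V} (h : PruneOf l m) : l.head? = m.head? := by
  obtain ⟨p, s, a, b, rfl, rfl⟩ := h; cases p <;> simp

lemma PruneOf.getLast?_eq {l m : List V} (h : PruneOf l m) : l.getLast? = m.getLast? := by
  obtain ⟨p, s, a, b, rfl, rfl⟩ := h
  simp [List.getLast?_append, List.getLast?_cons_cons]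

lemma SpiderStep.head?_eq {l m : List V} (h : SpiderStep G l m) : l.head? = m.head? := by
  obtain ⟨hl, hm, hlen, i, hi0, hi1, hj⟩ := h
  have := hj 0 (by omega)
  rwa [getElem?_zero', getElem?_zero'] at this

lemma SpiderStep.getLast?_eq {l m : List V} (h : SpiderStep G l m) :
    l.getLast? = m.getLast? := by
  obtain ⟨hl, hm, hlen, i, hi0, hi1, hj⟩ := h
  rw [List.getLast?_eq_getElem?, List.getLast?_eq_getElem?, ← hlen]
  exact hj _ (by omega)

lemma step_head?_eq {l m : List V}
    (h : PruneStep G l m ∨ SpiderStep G l m) : l.head? = m.head? := by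
  rcases h with ⟨_, _, h | h⟩ | h
  · exact h.head?_eq
  · exact h.head?_eq.symm
  · exact h.head?_eq

lemma step_getLast?_eq {l m : List V}
    (h : PruneStep G l m ∨ SpiderStep G l m) : l.getLast? = m.getLast? := by
  rcases h with ⟨_, _, h | h⟩ | h
  · exact h.getLast?_eq
  · exact h.getLast?_eq.symm
  · exact h.getLast?_eq

lemma HomEqv.head?_eq {l m : List V} (h : HomEqv G l m) : l.head? = m.head? := by
  induction h with
  | rel _ _ h => exact step_head?_eq h
  | refl _ => rfl
  | symm _ _ _ ih => exact ih.symm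
  | trans _ _ _ _ _ ih1 ih2 => exact ih1.trans ih2

lemma HomEqv.getLast?_eq {l m : List V} (h : HomEqv G l m) : l.getLast? = m.getLast? := by
  induction h with
  | rel _ _ h => exact step_getLast?_eq h
  | refl _ => rfl
  | symm _ _ _ ih => exact ih.symm
  | trans _ _ _ _ _ ih1 ih2 => exact ih1.trans ih2

lemma isWalk_append_tail {c l : List V} (hc : IsWalk G c) (hl : l.Chain' G.Adj)
    (hlink : c.getLast? = l.head?) : IsWalk G (c ++ l.tail) := by
  cases l with
  | nil => simpa using hc
  | cons x t =>
    refine ⟨by simp [hc.1], List.isChain_append.mpr ⟨hc.2, (List.isChain_cons.mp hl).2, ?_⟩⟩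
    intro p hp q hq
    have hp' : x = p := by rw [hlink] at hp; simpa using hp
    subst hp'
    exact (List.isChain_cons.mp hl).1 q hq

end Aux

section Cong
variable {G : XGraph V}

lemma pruneOf_append_left {c l m : List V} (hlink : c.getLast? = l.head?)
    (h : PruneOf l m) : PruneOf (c ++ l.tail) (c ++ m.tail) := by
  obtain ⟨p, s, a, b, rfl, rfl⟩ := h
  cases p with
  | nil =>
    have : c.getLast? = some a := by simpa using hlink
    obtain ⟨c', rfl⟩ := eq_concat_of_getLast? this
    exact ⟨c', s, a, b, by simp, by simp⟩
  | cons x p' =>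
    exact ⟨c ++ p', s, a, b, by simp, by simp⟩

lemma pruneOf_append_right {l m : List V} (h : PruneOf l m) (d : List V) :
    PruneOf (l ++ d) (m ++ d) := by
  obtain ⟨p, s, a, b, rfl, rfl⟩ := h
  exact ⟨p, s ++ d, a, b, by simp, by simp⟩

lemma spiderStep_append_left {c l m : List V} (hc : IsWalk G c)
    (hlink : c.getLast? = l.head?) (h : SpiderStep G l m) :
    SpiderStep G (c ++ l.tail) (c ++ m.tail) := by
  have hhd := h.head?_eq
  obtain ⟨hl, hm, hlen, i, hi0, hi1, hj⟩ := h
  have hc1 : 1 ≤ c.length := List.length_pos_iff.mpr hc.1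
  have hl1 : 1 ≤ l.length := by omega
  refine ⟨isWalk_append_tail hc hl.2 hlink,
    isWalk_append_tail hc hm.2 (hlink.trans hhd), ?_, c.length + i - 1, by omega, ?_, ?_⟩
  · have hm1 : 1 ≤ m.length := by omega
    simp only [List.length_append, List.length_tail]
    omega
  · simp only [List.length_append, List.length_tail]
    omega
  · intro j hji
    rcases lt_or_ge j c.length with hj' | hj'
    · rw [List.getElem?_append, List.getElem?_append, if_pos hj', if_pos hj']
    · rw [List.getElem?_append_right hj', List.getElem?_append_right hj',
        List.getElem?_tail, List.getElem?_tail]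
      exact hj _ (by omega)

lemma spiderStep_append_right {l m d : List V} (hd : d.Chain' G.Adj)
    (hlink : l.getLast? = d.head?) (h : SpiderStep G l m) :
    SpiderStep G (l ++ d.tail) (m ++ d.tail) := by
  have hlast := h.getLast?_eq
  obtain ⟨hl, hm, hlen, i, hi0, hi1, hj⟩ := h
  refine ⟨isWalk_append_tail hl hd hlink,
    isWalk_append_tail hm hd (hlast ▸ hlink), ?_, i, hi0, ?_, ?_⟩
  · simp [hlen]
  · simp only [List.length_append]
    omega
  · intro j hji
    rw [List.getElem?_append, List.getElem?_append, ← hlen, hj j hji]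

lemma step_append_left {c l m : List V} (hc : IsWalk G c)
    (hlink : c.getLast? = l.head?)
    (h : PruneStep G l m ∨ SpiderStep G l m) :
    PruneStep G (c ++ l.tail) (c ++ m.tail) ∨ SpiderStep G (c ++ l.tail) (c ++ m.tail) := by
  have hhd := step_head?_eq h
  rcases h with ⟨hl, hm, hp⟩ | h
  · refine Or.inl ⟨isWalk_append_tail hc hl.2 hlink,
      isWalk_append_tail hc hm.2 (hlink.trans hhd), ?_⟩
    rcases hp with hp | hp
    · exact Or.inl (pruneOf_append_left hlink hp)
    · exact Or.inr (pruneOf_append_left (hlink.trans hhd) hp)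
  · exact Or.inr (spiderStep_append_left hc hlink h)

lemma step_append_right {l m d : List V} (hd : d.Chain' G.Adj)
    (hlink : l.getLast? = d.head?)
    (h : PruneStep G l m ∨ SpiderStep G l m) :
    PruneStep G (l ++ d.tail) (m ++ d.tail) ∨ SpiderStep G (l ++ d.tail) (m ++ d.tail) := by
  have hlast := step_getLast?_eq h
  rcases h with ⟨hl, hm, hp⟩ | h
  · refine Or.inl ⟨isWalk_append_tail hl hd hlink,
      isWalk_append_tail hm hd (hlast ▸ hlink), ?_⟩
    rcases hp with hp | hp
    · exact Or.inl (pruneOf_append_right hp _)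
    · exact Or.inr (pruneOf_append_right hp _)
  · exact Or.inr (spiderStep_append_right hd hlink h)

lemma homEqv_wconcat_left {c l m : List V} (hc : IsWalk G c)
    (hlink : c.getLast? = l.head?) (h : HomEqv G l m) :
    HomEqv G (wconcat c l) (wconcat c m) := by
  unfold wconcat
  induction h with
  | rel x y hxy => exact EqvGen.rel _ _ (step_append_left hc hlink hxy)
  | refl x => exact EqvGen.refl _
  | symm x y hxy ih =>
    exact EqvGen.symm _ _ (ih (hlink.trans (HomEqv.head?_eq hxy).symm))
  | trans x y z hxy hyz ih1 ih2 =>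
    exact EqvGen.trans _ _ _ (ih1 hlink) (ih2 (hlink.trans (HomEqv.head?_eq hxy)))

lemma homEqv_wconcat_right {l m d : List V} (hd : d.Chain' G.Adj)
    (hlink : l.getLast? = d.head?) (h : HomEqv G l m) :
    HomEqv G (wconcat l d) (wconcat m d) := by
  unfold wconcat
  induction h with
  | rel x y hxy => exact EqvGen.rel _ _ (step_append_right hd hlink hxy)
  | refl x => exact EqvGen.refl _
  | symm x y hxy ih =>
    exact EqvGen.symm _ _ (ih ((HomEqv.getLast?_eq hxy).trans hlink))
  | trans x y z hxy hyz ih1 ih2 =>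
    exact EqvGen.trans _ _ _ (ih1 hlink) (ih2 ((HomEqv.getLast?_eq hxy).symm.trans hlink))

end Cong

section Key
variable {G : XGraph V} {H : XGraph W}

lemma spider_at_1 {a b b' c : W} {s : List W}
    (h1 : IsWalk H (a :: b :: c :: s)) (h2 : IsWalk H (a :: b' :: c :: s)) :
    SpiderStep H (a :: b :: c :: s) (a :: b' :: c :: s) := by
  refine ⟨h1, h2, by simp, 1, one_pos, by simp, ?_⟩
  intro j hj
  match j with
  | 0 => rfl
  | 1 => exact absurd rfl hj
  | (n+2) => rfl

lemma spider_at_2 {a b c c' : W} {s : List W} (hs : s ≠ [])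
    (h1 : IsWalk H (a :: b :: c :: s)) (h2 : IsWalk H (a :: b :: c' :: s)) :
    SpiderStep H (a :: b :: c :: s) (a :: b :: c' :: s) := by
  refine ⟨h1, h2, by simp, 2, by omega, ?_, ?_⟩
  · have := List.length_pos_iff.mpr hs
    simp only [List.length_cons]
    omega
  · intro j hj
    match j with
    | 0 => rfl
    | 1 => rfl
    | 2 => exact absurd rfl hj
    | (n+3) => rfl

lemma isWalkFrom_map {f : V → W} (hf : IsHom G H f) {x y : V} {l : List V}
    (h : IsWalkFrom G x y l) : IsWalkFrom H (f x) (f y) (l.map f) := by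
  obtain ⟨hch, hhd, hlast⟩ := h
  refine ⟨(List.isChain_map f).mpr (hch.imp fun {a b} h => hf h), ?_, ?_⟩
  · rw [List.head?_map, hhd]; rfl
  · rw [List.getLast?_map, hlast]; rfl

lemma wconcat_assoc {a b c : List V} (hb : b ≠ []) :
    wconcat (wconcat a b) c = wconcat a (wconcat b c) := by
  cases b with
  | nil => exact absurd rfl hb
  | cons x t => simp [wconcat]

lemma isWalkFrom_wconcat {x y z : V} {l m : List V}
    (h1 : IsWalkFrom G x y l) (h2 : IsWalkFrom G y z m) :
    IsWalkFrom G x z (wconcat l m) := by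
  obtain ⟨hch1, hhd1, hlast1⟩ := h1
  obtain ⟨hch2, hhd2, hlast2⟩ := h2
  have hlne : l ≠ [] := by rintro rfl; simp at hhd1
  have hlink : l.getLast? = m.head? := by rw [hlast1, hhd2]
  refine ⟨(isWalk_append_tail ⟨hlne, hch1⟩ hch2 hlink).2, ?_, ?_⟩
  · cases l with
    | nil => exact absurd rfl hlne
    | cons a t => simpa [wconcat] using hhd1
  · cases m with
    | nil => simp at hhd2
    | cons a t =>
      cases t with
      | nil =>
        have : a = z := by simpa using hlast2
        subst this
        have : a = y := by simpa using hhd2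
        subst this
        simpa [wconcat] using hlast1
      | cons a' t' =>
        have h3 : (a' :: t').getLast? = some z := by
          rw [← List.getLast?_cons_cons (a := a)]; exact hlast2
        show (l ++ (a' :: t')).getLast? = some z
        rw [List.getLast?_append, h3]
        rfl

lemma key_step {f g : V → W} (hst : HtpyStep G H f g) (u : V → V)
    (hu : ∀ v, G.Adj v (u v)) (α : List V) :
    ∀ (w w' : V), IsWalkFrom G w w' α →
      HomEqv H (wconcat [f w, g (u w), g w] (α.map g))
               (wconcat (α.map f) [f w', g (u w'), g w']) := by
  obtain ⟨hf, hg, hfg⟩ := hst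
  induction α with
  | nil => intro w w' h; simp [IsWalkFrom] at h
  | cons v β ih =>
    intro w w' h
    obtain ⟨hch, hhd, hlast⟩ := h
    have hv : w = v := by symm; simpa using hhd
    subst hv
    cases β with
    | nil =>
      have hww : w = w' := by simpa using hlast
      subst hww
      have e1 : wconcat [f w, g (u w), g w] ([w].map g) = [f w, g (u w), g w] := by
        simp [wconcat]
      have e2 : wconcat ([w].map f) [f w, g (u w), g w] = [f w, g (u w), g w] := by
        simp [wconcat]
      rw [e1, e2]
      exact EqvGen.refl _
    | cons v' rest =>
      have hadj : G.Adj w v' := (List.isChain_cons_cons.mp hch).1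
      have hchβ : List.Chain' G.Adj (v' :: rest) := (List.isChain_cons_cons.mp hch).2
      have hβ : IsWalkFrom G v' w' (v' :: rest) :=
        ⟨hchβ, rfl, by rw [← List.getLast?_cons_cons (a := w)]; exact hlast⟩
      have IH := ih v' w' hβ
      set s : List W := (v' :: rest).map g with hs
      have hsne : s ≠ [] := by simp [hs]
      -- chains of the intermediate walks
      have hmapg : List.Chain' H.Adj (g w :: s) := by
        rw [hs, ← List.map_cons]
        exact (List.isChain_map g).mpr (hch.imp fun {a b} h => hg h)
      have hchs : List.Chain' H.Adj s :=
        (List.isChain_map g).mpr (hchβ.imp fun {a b} h => hg h)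
      have hsv : s.head? = some (g v') := by simp [hs]
      have hW0 : IsWalk H (f w :: g (u w) :: g w :: s) := by
        refine ⟨by simp, ?_⟩
        unfold List.Chain'
        rw [List.isChain_cons_cons, List.isChain_cons_cons]
        exact ⟨hfg _ _ (hu w), hg (G.symm (hu w)), hmapg⟩
      have hW1 : IsWalk H (f w :: g v' :: g w :: s) := by
        refine ⟨by simp, ?_⟩
        unfold List.Chain'
        rw [List.isChain_cons_cons, List.isChain_cons_cons]
        exact ⟨hfg _ _ hadj, hg (G.symm hadj), hmapg⟩
      have hW2 : IsWalk H (f w :: f v' :: g w :: s) := by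
        refine ⟨by simp, ?_⟩
        unfold List.Chain'
        rw [List.isChain_cons_cons, List.isChain_cons_cons, List.isChain_cons]
        refine ⟨hf hadj, hfg _ _ (G.symm hadj), ?_, hchs⟩
        intro y hy
        rw [hsv] at hy
        have : g v' = y := by simpa using hy
        subst this
        exact hg hadj
      have hW3 : IsWalk H (f w :: f v' :: g (u v') :: s) := by
        refine ⟨by simp, ?_⟩
        unfold List.Chain'
        rw [List.isChain_cons_cons, List.isChain_cons_cons, List.isChain_cons]
        refine ⟨hf hadj, hfg _ _ (hu v'), ?_, hchs⟩
        intro y hy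
        rw [hsv] at hy
        have : g v' = y := by simpa using hy
        subst this
        exact hg (G.symm (hu v'))
      have h01 : HomEqv H (f w :: g (u w) :: g w :: s) (f w :: g v' :: g w :: s) :=
        EqvGen.rel _ _ (Or.inr (spider_at_1 hW0 hW1))
      have h12 : HomEqv H (f w :: g v' :: g w :: s) (f w :: f v' :: g w :: s) :=
        EqvGen.rel _ _ (Or.inr (spider_at_1 hW1 hW2))
      have h23 : HomEqv H (f w :: f v' :: g w :: s) (f w :: f v' :: g (u v') :: s) :=
        EqvGen.rel _ _ (Or.inr (spider_at_2 hsne hW2 hW3))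
      -- the last leg: prefix congruence with [f w, f v']
      have hcw : IsWalk H [f w, f v'] := ⟨by simp, List.isChain_pair.mpr (hf hadj)⟩
      have hlink : ([f w, f v'] : List W).getLast? =
          (wconcat [f v', g (u v'), g v'] ((v' :: rest).map g)).head? := by
        simp [wconcat]
      have h3X : HomEqv H (wconcat [f w, f v'] (wconcat [f v', g (u v'), g v'] ((v' :: rest).map g)))
          (wconcat [f w, f v'] (wconcat ((v' :: rest).map f) [f w', g (u w'), g w'])) :=
        homEqv_wconcat_left hcw hlink IH
      -- identify the terms
      have e3 : wconcat [f w, f v'] (wconcat [f v', g (u v'), g v'] ((v' :: rest).map g)) =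
          (f w :: f v' :: g (u v') :: s) := by
        simp [wconcat, hs]
      have e4 : wconcat [f w, f v'] (wconcat ((v' :: rest).map f) [f w', g (u w'), g w']) =
          wconcat ((w :: v' :: rest).map f) [f w', g (u w'), g w'] := by
        simp [wconcat]
      have e0 : wconcat [f w, g (u w), g w] ((w :: v' :: rest).map g) =
          (f w :: g (u w) :: g w :: s) := by
        simp [wconcat, hs]
      rw [e0]
      rw [e3, e4] at h3X
      exact EqvGen.trans _ _ _ h01 (EqvGen.trans _ _ _ h12 (EqvGen.trans _ _ _ h23 h3X))

end Key


/-- for finite graphs with no isolated vertices, ×-homotopic morphisms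
induce naturally isomorphic functors on fundamental groupoids. -/
theorem stmt11 [Fintype V] [Fintype W] (G : XGraph V) (H : XGraph W)
    (hG : ∀ v : V, ∃ u, G.Adj v u) (hH : ∀ w : W, ∃ u, H.Adj w u)
    (φ ψ : V → W) (hφ : IsHom G H φ) (hψ : IsHom G H ψ)
    (h : Homotopic G H φ ψ) :
    ∃ γ : V → List W,
      (∀ w : V, IsWalkFrom H (φ w) (ψ w) (γ w)) ∧
      ∀ (w w' : V) (α : List V), IsWalkFrom G w w' α →
        HomEqv H (wconcat (γ w) (α.map ψ)) (wconcat (α.map φ) (γ w')) := by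
  classical
  choose u hu using hG
  clear hψ hH hφ
  induction h with
  | refl =>
    refine ⟨fun w => [φ w], fun w => ⟨List.isChain_singleton _, by simp, by simp⟩, ?_⟩
    intro w w' α hα
    obtain ⟨hch, hhd, hlast⟩ := hα
    cases α with
    | nil => simp at hhd
    | cons v rest =>
      have hv : w = v := by symm; simpa using hhd
      subst hv
      have e1 : wconcat [φ w] ((w :: rest).map φ) = (w :: rest).map φ := by
        simp [wconcat]
      have e2 : wconcat ((w :: rest).map φ) [φ w'] = (w :: rest).map φ := by
        simp [wconcat]
      rw [e1, e2]
      exact Relation.EqvGen.refl _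
  | tail hab hbc ih =>
    rename_i b c
    obtain ⟨γ, hγ1, hγ2⟩ := ih
    obtain ⟨hb, hc, hbc'⟩ := hbc
    set δ : V → List W := fun w => [b w, c (u w), c w] with hδ
    have hδ1 : ∀ w, IsWalkFrom H (b w) (c w) (δ w) := by
      intro w
      refine ⟨?_, by simp [hδ], by simp [hδ]⟩
      rw [hδ]
      simp only [List.Chain', List.isChain_cons_cons, List.isChain_singleton, and_true]
      exact ⟨hbc' _ _ (hu w), hc (G.symm (hu w))⟩
    refine ⟨fun w => wconcat (γ w) (δ w),
      fun w => isWalkFrom_wconcat (hγ1 w) (hδ1 w), ?_⟩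
    intro w w' α hα
    have hαne : α ≠ [] := by rintro rfl; simp [IsWalkFrom] at hα
    have A := hγ2 w w' α hα
    have B := key_step ⟨hb, hc, hbc'⟩ u hu α w w' hα
    have hδne : δ w ≠ [] := by simp [hδ]
    have hγne : ∀ v, γ v ≠ [] := by
      intro v hv
      have := (hγ1 v).2.1
      rw [hv] at this
      simp at this
    have hbα : IsWalkFrom H (b w) (b w') (α.map b) := isWalkFrom_map hb hα
    have hmapne : α.map b ≠ [] := by simpa using hαne
    -- left congruence: prepend γ w to B
    have hγlast : (γ w).getLast? = (wconcat (δ w) (α.map c)).head? := by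
      have h1 : (wconcat (δ w) (α.map c)).head? = some (b w) := by
        simp [wconcat, hδ]
      rw [h1, (hγ1 w).2.2]
    have step1 : HomEqv H (wconcat (γ w) (wconcat (δ w) (α.map c)))
        (wconcat (γ w) (wconcat (α.map b) (δ w'))) :=
      homEqv_wconcat_left ⟨hγne w, (hγ1 w).1⟩ hγlast B
    -- right congruence: append δ w' to A
    have hAwalk : IsWalkFrom H (φ w) (b w') (wconcat (γ w) (α.map b)) :=
      isWalkFrom_wconcat (hγ1 w) hbα
    have hAlast : (wconcat (γ w) (α.map b)).getLast? = (δ w').head? := by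
      rw [hAwalk.2.2, (hδ1 w').2.1]
    have step2 : HomEqv H (wconcat (wconcat (γ w) (α.map b)) (δ w'))
        (wconcat (wconcat (α.map φ) (γ w')) (δ w')) :=
      homEqv_wconcat_right (hδ1 w').1 hAlast A
    -- reassociate
    rw [wconcat_assoc hδne]
    rw [wconcat_assoc hmapne] at step2
    have egoal : (fun w => wconcat (γ w) (δ w)) w' = wconcat (γ w') (δ w') := rfl
    rw [egoal, ← wconcat_assoc (hγne w')]
    exact Relation.EqvGen.trans _ _ _ step1 step2
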